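/- Under the same assumptions, let u(P_H f) denote the exact velocity solution of the mixed problem with source P_H f in place of f. Then u(P_H f) ∈ V^ms(f); in particular u(P_H f) = (id − 𝒞)π_H(u(P_H f)). Consequently, if f ∈ Q_H (so that P_H f = f), the ideal multiscale method is exact for the velocity: u = u_H^ms. -/

import Mathlib

open scoped RealInnerProductSpace

/-- **Exactness of the ideal multiscale method for projected data.**
`H = H₀(div,Ω)`, `D` the divergence into `S`, `QH = Q_H` with `L²`-projection,
`L0 = L²₀(Ω)`, `π` the stable commuting quasi-interpolation with `V_H = im π` and
`W_{div0} = ker π ⊓ ker D`, `𝒞` the ideal correction operator, and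
`V^ms = (id − 𝒞)V_H`.  If `u(P_H f)` denotes the exact velocity for the source
`P_H f`, then `u(P_H f) ∈ V^ms(f)`, i.e. `u(P_H f) ∈ V^ms` with
`div u(P_H f) = -P_H f`, and `u(P_H f) = (id − 𝒞)π_H(u(P_H f))`.  Consequently,
if `f ∈ Q_H` the method is exact for the velocity: `u = u_H^ms`. -/
theorem ideal_method_exactness
    {H S : Type*}
    [NormedAddCommGroup H] [InnerProductSpace ℝ H] [CompleteSpace H]
    [NormedAddCommGroup S] [InnerProductSpace ℝ S] [CompleteSpace S]
    (D : H →L[ℝ] S)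
    (QH L0 : Submodule ℝ S) [Submodule.HasOrthogonalProjection QH]
    (a : H →ₗ[ℝ] H →ₗ[ℝ] ℝ)
    (hsym : ∀ v w : H, a v w = a w v)
    (αa : ℝ) (hαa : 0 < αa) (hcoer : ∀ v : H, αa * ‖v‖ ^ 2 ≤ a v v)
    (π 𝒞 : H →L[ℝ] H) (hπproj : ∀ v : H, π (π v) = π v)
    (hcomm : ∀ v : H, D (π v) = (Submodule.orthogonalProjectionOnto QH (D v) : S))
    (h𝒞mem : ∀ v : H, 𝒞 v ∈ LinearMap.ker (π : H →ₗ[ℝ] H) ⊓ LinearMap.ker (D : H →ₗ[ℝ] S))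
    (h𝒞eq : ∀ v : H, ∀ w ∈ LinearMap.ker (π : H →ₗ[ℝ] H) ⊓ LinearMap.ker (D : H →ₗ[ℝ] S), a (𝒞 v) w = a v w)
    (hDL0 : ∀ v : H, D v ∈ L0)
    (f : S) (hf : f ∈ L0) (hPfL0 : (Submodule.orthogonalProjectionOnto QH f : S) ∈ L0)
    -- exact solution (u,p) with source f
    (u : H) (p : S) (hp : p ∈ L0)
    (h1 : ∀ v : H, a u v + ⟪D v, p⟫ = 0)
    (h2 : ∀ q ∈ L0, ⟪D u, q⟫ = -⟪f, q⟫)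
    -- exact solution (uPf, pPf) with source P_H f
    (uPf : H) (pPf : S) (hpPf : pPf ∈ L0)
    (h1Pf : ∀ v : H, a uPf v + ⟪D v, pPf⟫ = 0)
    (h2Pf : ∀ q ∈ L0, ⟪D uPf, q⟫ = -⟪(Submodule.orthogonalProjectionOnto QH f : S), q⟫)
    -- ideal multiscale solution (uHms, pH)
    (uHms : H) (pH : S)
    (huHms : uHms ∈ Submodule.map ((ContinuousLinearMap.id ℝ H - 𝒞) : H →ₗ[ℝ] H)
      (LinearMap.range (π : H →ₗ[ℝ] H)))
    (hpH : pH ∈ QH ⊓ L0)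
    (hd1 : ∀ v ∈ Submodule.map ((ContinuousLinearMap.id ℝ H - 𝒞) : H →ₗ[ℝ] H)
      (LinearMap.range (π : H →ₗ[ℝ] H)), a uHms v + ⟪D v, pH⟫ = 0)
    (hd2 : ∀ qH ∈ QH, ⟪D uHms, qH⟫ = -⟪f, qH⟫) :
    uPf ∈ Submodule.map ((ContinuousLinearMap.id ℝ H - 𝒞) : H →ₗ[ℝ] H)
        (LinearMap.range (π : H →ₗ[ℝ] H)) ∧
    D uPf = -(Submodule.orthogonalProjectionOnto QH f : S) ∧
    uPf = (ContinuousLinearMap.id ℝ H - 𝒞) (π uPf) ∧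
    (f ∈ QH → u = uHms) := by
  -- zero-testing via coercivity
  have key : ∀ w : H, a w w = 0 → w = 0 := by
    intro w hw
    have h1 := hcoer w
    rw [hw] at h1
    have h2 : ‖w‖ ^ 2 = 0 := le_antisymm (by nlinarith) (sq_nonneg _)
    have h3 : ‖w‖ = 0 := pow_eq_zero_iff (n := 2) (by norm_num) |>.mp h2
    simpa using h3
  -- zero-testing in a submodule
  have keyS : ∀ (T : Submodule ℝ S), ∀ s ∈ T, (∀ q ∈ T, ⟪s, q⟫ = 0) → s = 0 := by
    intro T s hs h
    exact inner_self_eq_zero.mp (h s hs)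
  -- D uPf = -(P f)
  have hDuPf : D uPf = -(Submodule.orthogonalProjectionOnto QH f : S) := by
    have hm : D uPf + (Submodule.orthogonalProjectionOnto QH f : S) ∈ L0 := L0.add_mem (hDL0 uPf) hPfL0
    have hz : D uPf + (Submodule.orthogonalProjectionOnto QH f : S) = 0 := by
      refine keyS L0 _ hm ?_
      intro q hq
      rw [inner_add_left, h2Pf q hq]
      ring
    exact eq_neg_of_add_eq_zero_left hz
  -- the defect w := uPf - (id - 𝒞)(π uPf)
  set w : H := uPf - (π uPf - 𝒞 (π uPf)) with hw_def
  have hπw : π w = 0 := by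
    have h𝒞π : π (𝒞 (π uPf)) = 0 := LinearMap.mem_ker.mp (h𝒞mem (π uPf)).1
    simp [hw_def, map_sub, hπproj, h𝒞π]
  have hD𝒞 : D (𝒞 (π uPf)) = 0 := LinearMap.mem_ker.mp (h𝒞mem (π uPf)).2
  have hDw : D w = 0 := by
    have hPP : (Submodule.orthogonalProjectionOnto QH ((Submodule.orthogonalProjectionOnto QH f : S)) : S)
        = (Submodule.orthogonalProjectionOnto QH f : S) :=
      Submodule.starProjection_eq_self_iff.mpr (SetLike.coe_mem _)
    have hDπ : D (π uPf) = -(Submodule.orthogonalProjectionOnto QH f : S) := by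
      rw [hcomm, hDuPf]
      rw [map_neg, Submodule.coe_neg, hPP]
    simp [hw_def, map_sub, hDπ, hD𝒞, hDuPf]
  have hwmem : w ∈ LinearMap.ker (π : H →ₗ[ℝ] H) ⊓ LinearMap.ker (D : H →ₗ[ℝ] S) :=
    Submodule.mem_inf.mpr ⟨LinearMap.mem_ker.mpr hπw, LinearMap.mem_ker.mpr hDw⟩
  have haww : a w w = 0 := by
    have h1w : a uPf w = 0 := by
      have := h1Pf w
      rw [hDw] at this
      simpa using this
    have h2w : a (π uPf - 𝒞 (π uPf)) w = 0 := by
      have := h𝒞eq (π uPf) w hwmem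
      simp [map_sub, LinearMap.sub_apply, this]
    calc a w w = a uPf w - a (π uPf - 𝒞 (π uPf)) w := by
          simp [hw_def, map_sub, LinearMap.sub_apply]; ring
      _ = 0 := by rw [h1w, h2w]; ring
  have hw0 : w = 0 := key w haww
  have hself : uPf = (ContinuousLinearMap.id ℝ H - 𝒞) (π uPf) := by
    have : uPf = π uPf - 𝒞 (π uPf) := by
      have := sub_eq_zero.mp hw0
      simpa using this
    simpa using this
  have hmem : uPf ∈ Submodule.map ((ContinuousLinearMap.id ℝ H - 𝒞) : H →ₗ[ℝ] H)
      (LinearMap.range (π : H →ₗ[ℝ] H)) := by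
    refine ⟨π uPf, LinearMap.mem_range.mpr ⟨uPf, rfl⟩, ?_⟩
    exact hself.symm
  refine ⟨hmem, hDuPf, hself, ?_⟩
  -- exactness when f ∈ QH
  intro hfQ
  have hPf : (Submodule.orthogonalProjectionOnto QH f : S) = f := Submodule.starProjection_eq_self_iff.mpr hfQ
  -- first: u = uPf
  have huuPf : u = uPf := by
    set e : H := u - uPf with he_def
    have hDe : D e = 0 := by
      refine keyS L0 _ (by simpa [he_def, map_sub] using L0.sub_mem (hDL0 u) (hDL0 uPf)) ?_
      intro q hq
      have := h2 q hq
      have h2' := h2Pf q hq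
      rw [hPf] at h2'
      simp [he_def, map_sub, inner_sub_left, this, h2']
    have haee : a e e = 0 := by
      have h1e : a u e = 0 := by
        have := h1 e
        rw [hDe] at this
        simpa using this
      have h2e : a uPf e = 0 := by
        have := h1Pf e
        rw [hDe] at this
        simpa using this
      calc a e e = a u e - a uPf e := by simp [he_def, map_sub, LinearMap.sub_apply]; ring
        _ = 0 := by rw [h1e, h2e]; ring
    have := key e haee
    exact sub_eq_zero.mp this
  -- second: uPf = uHms
  have hDuHms : D uHms = -f := by
    obtain ⟨z, hz, hzeq⟩ := huHms
    obtain ⟨y, hy⟩ := LinearMap.mem_range.mp hz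
    have hDz : D uHms = (Submodule.orthogonalProjectionOnto QH (D y) : S) := by
      have hD𝒞z : D (𝒞 z) = 0 := LinearMap.mem_ker.mp (h𝒞mem z).2
      rw [← hzeq]
      simp only [ContinuousLinearMap.coe_sub, LinearMap.sub_apply,
        ContinuousLinearMap.coe_coe, ContinuousLinearMap.coe_id, LinearMap.id_apply]
      rw [map_sub, hD𝒞z, sub_zero, ← hy, ContinuousLinearMap.coe_coe, hcomm]
    have hmemQ : D uHms + f ∈ QH := by
      rw [hDz]; exact QH.add_mem (SetLike.coe_mem _) hfQ
    have hz0 : D uHms + f = 0 := by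
      refine keyS QH _ hmemQ ?_
      intro q hq
      rw [inner_add_left, hd2 q hq]
      ring
    exact eq_neg_of_add_eq_zero_left hz0
  have huPfuHms : uPf = uHms := by
    set Vms := Submodule.map ((ContinuousLinearMap.id ℝ H - 𝒞) : H →ₗ[ℝ] H)
      (LinearMap.range (π : H →ₗ[ℝ] H)) with hVms
    set e : H := uPf - uHms with he_def
    have heV : e ∈ Vms := Vms.sub_mem hmem huHms
    have hDe : D e = 0 := by
      simp [he_def, map_sub, hDuPf, hDuHms, hPf]
    have haee : a e e = 0 := by
      have h1e : a uPf e = 0 := by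
        have := h1Pf e
        rw [hDe] at this
        simpa using this
      have h2e : a uHms e = 0 := by
        have := hd1 e heV
        rw [hDe] at this
        simpa using this
      calc a e e = a uPf e - a uHms e := by simp [he_def, map_sub, LinearMap.sub_apply]; ring
        _ = 0 := by rw [h1e, h2e]; ring
    exact sub_eq_zero.mp (key e haee)
  rw [huuPf, huPfuHms]
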